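/- Let d be a pseudometric on ℕ₀³ with coordinatewise λ-contraction property and no 1-way Cauchy sequence, and let μ = inf_x ρ(x) > 0. Set C₁ = 49158. Given K ≥ 1, if 1 > (2+λ)·λ·K·C₁, then every 3-way set (translated octant) has diameter greater than K·μ. -/

import Mathlib

/-- The grid ℕ₀³. -/
abbrev Grid : Type := Fin 3 → ℕ

/-- Standard basis vector eᵢ. -/
def e (i : Fin 3) : Grid := fun j => if j = i then 1 else 0

/-- ρ(x) = max of the three distances to successors. -/
noncomputable def rho (d : Grid → Grid → ℝ) (x : Grid) : ℝ :=
  max (d x (x + e 0)) (max (d x (x + e 1)) (d x (x + e 2)))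

/-- A 1-way sequence: consecutive differences are basis vectors. -/
def OneWay (s : ℕ → Grid) : Prop := ∀ n, ∃ i, s (n + 1) = s n + e i

/-- Cauchy with respect to the pseudometric d. -/
def IsCauchySeq (d : Grid → Grid → ℝ) (s : ℕ → Grid) : Prop :=
  ∀ ε > (0 : ℝ), ∃ N, ∀ m ≥ N, ∀ n ≥ N, d (s m) (s n) < ε

/-- d is a pseudometric. -/
def Pseudo (d : Grid → Grid → ℝ) : Prop :=
  (∀ x, d x x = 0) ∧ (∀ x y, 0 ≤ d x y) ∧ (∀ x y, d x y = d y x) ∧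
    (∀ x y z, d x z ≤ d x y + d y z)

/-- The coordinatewise λ-contraction property. -/
def Contractive (d : Grid → Grid → ℝ) (lam : ℝ) : Prop :=
  ∀ a b : Grid, ∃ i : Fin 3, d (a + e i) (b + e i) ≤ lam * d a b

/-- A 2-way set: each element has exactly two of its three successors inside. -/
def TwoWaySet (S : Set Grid) : Prop :=
  ∀ s ∈ S, ∃ i : Fin 3, s + e i ∉ S ∧ ∀ j : Fin 3, j ≠ i → s + e j ∈ S

theorem stmt13 (d : Grid → Grid → ℝ) (lam : ℝ) (h0 : 0 < lam) (h1 : lam < 1)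
    (hd : Pseudo d) (hc : Contractive d lam)
    (hno : ¬ ∃ s : ℕ → Grid, OneWay s ∧ IsCauchySeq d s)
    (μ : ℝ) (hμ : IsGLB (Set.range (rho d)) μ) (hμ0 : 0 < μ)
    (K : ℝ) (hK : 1 ≤ K)
    (hlamK : 1 > (2 + lam) * lam * K * 49158)
    -- (a): every 3-way set of diameter ≤ D contains a 2-way subset of diameter ≤ λ·C₁·D
    (ha : ∀ (β : Grid) (D : ℝ), (∀ k k' : Grid, d (β + k) (β + k') ≤ D) →
      ∃ S : Set Grid, S.Nonempty ∧ (∀ s ∈ S, ∃ k : Grid, s = β + k) ∧ TwoWaySet S ∧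
        ∀ x ∈ S, ∀ y ∈ S, d x y ≤ lam * 49158 * D)
    -- (b): a 2-way set with inf ρ > (2+λ)·diam yields a 3-way set of diameter ≤ 6λ·inf ρ
    (hb : ∀ (S : Set Grid) (D R : ℝ), TwoWaySet S →
      (∀ x ∈ S, ∀ y ∈ S, d x y ≤ D) → IsGLB (rho d '' S) R → R > (2 + lam) * D →
      ∃ β : Grid, ∀ k k' : Grid, d (β + k) (β + k') ≤ 6 * lam * R) :
    ∀ β : Grid, ∃ k k' : Grid, d (β + k) (β + k') > K * μ := by
  intro β
  by_contra hcon
  push_neg at hcon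
  obtain ⟨S, hSne, hSsub, hStwo, hSdiam⟩ := ha β (K * μ) hcon
  set D : ℝ := lam * 49158 * (K * μ) with hD
  -- the image of rho on S
  have hne : (rho d '' S).Nonempty := hSne.image _
  have hlb : μ ∈ lowerBounds (rho d '' S) := by
    rintro y ⟨x, _, rfl⟩
    exact hμ.1 (Set.mem_range_self x)
  have hbdd : BddBelow (rho d '' S) := ⟨μ, hlb⟩
  set R : ℝ := sInf (rho d '' S) with hR
  have hglb : IsGLB (rho d '' S) R := isGLB_csInf hne hbdd
  have hμR : μ ≤ R := le_csInf hne hlb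
  -- R ≤ K * μ
  obtain ⟨x, hxS⟩ := hSne
  obtain ⟨k, rfl⟩ := hSsub x hxS
  have hrB : ∀ i : Fin 3, d (β + k) (β + k + e i) ≤ K * μ := by
    intro i
    have := hcon k (k + e i)
    rwa [← add_assoc] at this
  have hrho : rho d (β + k) ≤ K * μ := by
    simp only [rho]
    exact max_le (hrB 0) (max_le (hrB 1) (hrB 2))
  have hRle : R ≤ K * μ :=
    le_trans (csInf_le hbdd ⟨β + k, hxS, rfl⟩) hrho
  -- R > (2+lam) * D
  have hgt : R > (2 + lam) * D := by
    have : (2 + lam) * D < μ := by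
      have h2 : (2 + lam) * lam * K * 49158 * μ < 1 * μ :=
        mul_lt_mul_of_pos_right hlamK hμ0
      nlinarith
    linarith
  obtain ⟨β', hβ'⟩ := hb S D R hStwo hSdiam hglb hgt
  -- 6 * lam * R < μ
  have hsmall : 6 * lam * R < μ := by
    have hR2 : 6 * lam * R ≤ 6 * lam * (K * μ) := by
      apply mul_le_mul_of_nonneg_left hRle
      positivity
    have : 6 * lam * (K * μ) < μ := by nlinarith
    linarith
  -- but ρ(β') ≥ μ while each successor distance ≤ 6λR
  have hμβ' : μ ≤ rho d β' := hμ.1 (Set.mem_range_self β')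
  have hrb : ∀ i : Fin 3, d β' (β' + e i) ≤ 6 * lam * R := by
    intro i
    have := hβ' 0 (e i)
    rwa [add_zero] at this
  have : rho d β' ≤ 6 * lam * R :=
    max_le (hrb 0) (max_le (hrb 1) (hrb 2))
  linarith
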